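/- Let H : ℂ → ℂ be given by H(h) = −(1/27)·(h−4)³/h² (with the junk value H(0) = 0 coming from division by zero). For every n ≥ 1 and every c ∈ ℂ with c ≠ 0 and c ≠ 1, the set {z ∈ ℂ : H^[k](z) ≠ 0 for all 0 ≤ k < n, and H^[n](z) = c} has exactly 3ⁿ elements. -/

import Mathlib

/-- The hessian dynamical system in the coordinate `h = j/(2⁶·3³)`; note the
junk value `Hdyn 0 = 0` coming from Lean's division by zero. -/
noncomputable def Hdyn (h : ℂ) : ℂ := -(1 / 27) * (h - 4) ^ 3 / h ^ 2

open Polynomial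

noncomputable def Pc (c : ℂ) : ℂ[X] := (X - C 4) ^ 3 + C (27 * c) * X ^ 2

lemma Pc_monic (c : ℂ) : (Pc c).Monic := by
  have h1 : ((X - C (4:ℂ)) ^ 3).Monic := (monic_X_sub_C 4).pow 3
  have : ((X - C (4:ℂ)) ^ 3).natDegree = 3 := by
    simp [natDegree_pow]
  apply h1.add_of_left
  rw [degree_eq_natDegree h1.ne_zero, this]
  refine lt_of_le_of_lt (degree_mul_le _ _) ?_
  refine lt_of_le_of_lt (add_le_add degree_C_le (degree_X_pow 2).le) ?_
  norm_num

lemma Pc_natDegree (c : ℂ) : (Pc c).natDegree = 3 := by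
  unfold Pc
  have h1 : ((X - C (4:ℂ)) ^ 3).natDegree = 3 := by simp [natDegree_pow]
  have h2 : (C (27 * c) * X ^ 2 : ℂ[X]).degree < ((X - C 4) ^ 3 : ℂ[X]).degree := by
    have h3 : ((X - C (4:ℂ)) ^ 3).degree = 3 := by
      rw [degree_pow, degree_X_sub_C]; rfl
    rw [h3]
    refine lt_of_le_of_lt (degree_mul_le _ _) ?_
    refine lt_of_le_of_lt (add_le_add degree_C_le (degree_X_pow 2).le) ?_
    norm_num
  rw [natDegree_add_eq_left_of_degree_lt h2, h1]

lemma Pc_eval (c z : ℂ) : (Pc c).eval z = (z - 4) ^ 3 + 27 * c * z ^ 2 := by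
  simp [Pc]

lemma Pc_deriv_eval (c z : ℂ) : (Pc c).derivative.eval z = 3 * (z - 4) ^ 2 + 54 * c * z := by
  unfold Pc
  rw [derivative_add, derivative_pow, derivative_mul]
  simp
  ring

lemma Pc_sep (c : ℂ) (hc0 : c ≠ 0) (hc1 : c ≠ 1) : (Pc c).Separable := by
  rw [Separable, Polynomial.isCoprime_iff_aeval_ne_zero_of_isAlgClosed (k := ℂ) ℂ]
  intro z
  by_contra h
  push_neg at h
  obtain ⟨h1, h2⟩ := h
  simp only [Polynomial.coe_aeval_eq_eval] at h1 h2
  rw [Pc_eval] at h1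
  rw [Pc_deriv_eval] at h2
  have key : (z - 4) ^ 2 * (z + 8) = 0 := by linear_combination z * h2 - 2 * h1
  rcases mul_eq_zero.mp key with h | h
  · have hz : z = 4 := by
      have := pow_eq_zero_iff (n := 2) (by norm_num) |>.mp h
      exact sub_eq_zero.mp this
    rw [hz] at h1
    exact hc0 (by linear_combination h1 / 432)
  · have hz : z = -8 := eq_neg_of_add_eq_zero_left h
    rw [hz] at h1
    exact hc1 (by linear_combination h1 / 1728)

noncomputable def fib (c : ℂ) : Finset ℂ := (Pc c).roots.toFinset

lemma Hdyn_zero : Hdyn 0 = 0 := by simp [Hdyn]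

lemma Hdyn_one : Hdyn 1 = 1 := by norm_num [Hdyn]

lemma mem_fib {c : ℂ} (hc0 : c ≠ 0) (z : ℂ) : z ∈ fib c ↔ Hdyn z = c := by
  rw [fib, Multiset.mem_toFinset, mem_roots ((Pc_monic c).ne_zero), IsRoot.def, Pc_eval]
  constructor
  · intro h
    have hz : z ≠ 0 := by
      rintro rfl
      norm_num at h
    rw [Hdyn]
    field_simp
    linear_combination -h
  · intro h
    have hz : z ≠ 0 := by
      rintro rfl
      rw [Hdyn_zero] at h
      exact hc0 h.symm
    rw [Hdyn] at h
    field_simp at h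
    linear_combination -h

lemma card_fib {c : ℂ} (hc0 : c ≠ 0) (hc1 : c ≠ 1) : (fib c).card = 3 := by
  rw [fib, Multiset.toFinset_card_of_nodup (nodup_roots (Pc_sep c hc0 hc1))]
  rw [splits_iff_card_roots.mp (IsAlgClosed.splits (Pc c)), Pc_natDegree]

lemma mem_S_ne {n : ℕ} (hn : 1 ≤ n) {c w : ℂ} (hc0 : c ≠ 0) (hc1 : c ≠ 1)
    (hw : w ∈ {z : ℂ | (∀ k, k < n → Hdyn^[k] z ≠ 0) ∧ Hdyn^[n] z = c}) :
    w ≠ 0 ∧ w ≠ 1 := by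
  obtain ⟨h1, h2⟩ := hw
  refine ⟨by simpa using h1 0 hn, ?_⟩
  rintro rfl
  rw [Function.iterate_fixed Hdyn_one n] at h2
  exact hc1 h2.symm

theorem generic_fiber_of_iterate_has_three_pow_points (n : ℕ) (hn : 1 ≤ n)
    (c : ℂ) (hc0 : c ≠ 0) (hc1 : c ≠ 1) :
    {z : ℂ | (∀ k, k < n → Hdyn^[k] z ≠ 0) ∧ Hdyn^[n] z = c}.ncard = 3 ^ n := by
  induction n, hn using Nat.le_induction with
  | base =>
    have hset : {z : ℂ | (∀ k, k < 1 → Hdyn^[k] z ≠ 0) ∧ Hdyn^[1] z = c}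
        = ↑(fib c) := by
      ext z
      simp only [Set.mem_setOf_eq, Nat.lt_one_iff, forall_eq, Function.iterate_one,
        Function.iterate_zero, id_eq, Finset.coe_sort_coe, Finset.mem_coe,
        mem_fib hc0]
      constructor
      · exact fun h => h.2
      · intro h
        refine ⟨?_, h⟩
        rintro rfl
        rw [Hdyn_zero] at h
        exact hc0 h.symm
    rw [hset, Set.ncard_coe_finset, card_fib hc0 hc1, pow_one]
  | succ n hn ih =>
    set S := {z : ℂ | (∀ k, k < n → Hdyn^[k] z ≠ 0) ∧ Hdyn^[n] z = c} with hS
    have hSfin : S.Finite := by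
      apply Set.finite_of_ncard_ne_zero
      rw [ih]
      positivity
    set T := hSfin.toFinset with hT
    have hTmem : ∀ w, w ∈ T ↔ w ∈ S := fun w => hSfin.mem_toFinset
    have hset : {z : ℂ | (∀ k, k < n + 1 → Hdyn^[k] z ≠ 0) ∧ Hdyn^[n + 1] z = c}
        = ↑(T.biUnion fib) := by
      ext z
      simp only [Set.mem_setOf_eq, Finset.coe_biUnion, Set.mem_iUnion, Finset.mem_coe,
        hTmem]
      constructor
      · rintro ⟨h1, h2⟩
        refine ⟨Hdyn z, ⟨fun k hk => ?_, ?_⟩, ?_⟩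
        · have := h1 (k + 1) (by omega)
          rwa [Function.iterate_succ_apply] at this
        · rwa [← Function.iterate_succ_apply]
        · rw [mem_fib]
          · exact fun h0 => (by simpa [h0] using h1 1 (by omega))
          -- need Hdyn z ≠ 0 as the `c` argument of mem_fib
      · rintro ⟨w, hwS, hzw⟩
        have hw0 : w ≠ 0 := (mem_S_ne hn hc0 hc1 hwS).1
        rw [mem_fib hw0] at hzw
        obtain ⟨h1, h2⟩ := hwS
        constructor
        · intro k hk
          rcases Nat.eq_zero_or_pos k with rfl | hkpos
          · simp only [Function.iterate_zero, id_eq]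
            rintro rfl
            rw [Hdyn_zero] at hzw
            exact hw0 hzw.symm
          · obtain ⟨j, rfl⟩ : ∃ j, k = j + 1 := ⟨k - 1, by omega⟩
            rw [Function.iterate_succ_apply, hzw]
            exact h1 j (by omega)
        · rw [Function.iterate_succ_apply, hzw, h2]
    rw [hset, Set.ncard_coe_finset]
    rw [Finset.card_biUnion]
    · have hcard : ∀ w ∈ T, (fib w).card = 3 := by
        intro w hw
        rw [hTmem] at hw
        obtain ⟨hw0, hw1⟩ := mem_S_ne hn hc0 hc1 hw
        exact card_fib hw0 hw1
      rw [Finset.sum_congr rfl hcard, Finset.sum_const, smul_eq_mul]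
      have hTc : T.card = 3 ^ n := by
        rw [hT, ← Set.ncard_eq_toFinset_card S hSfin, ih]
      rw [hTc]; ring
    · intro w1 hw1 w2 hw2 hne
      rw [Finset.mem_coe, hTmem] at hw1 hw2
      have h1 := (mem_S_ne hn hc0 hc1 hw1).1
      have h2 := (mem_S_ne hn hc0 hc1 hw2).1
      rw [Function.onFun, Finset.disjoint_left]
      intro z hz1 hz2
      rw [mem_fib h1] at hz1
      rw [mem_fib h2] at hz2
      exact hne (hz1 ▸ hz2)
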